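/- For positive definite matrices A, B, and p with 1 ≤ p ≤ 2 and t ∈ [0,1], letting μ = (t·A^p + (1-t)·B^p)^(1/p), one has trace(μ²) ≤ t·trace(A²) + (1-t)·trace(B²). -/

import Mathlib

open Matrix MeasureTheory
open scoped ComplexOrder

/-- Apply a real function to a Hermitian matrix via the spectral decomposition. -/
noncomputable def matFun {n : ℕ} (A : Matrix (Fin n) (Fin n) ℂ) (hA : A.IsHermitian)
    (g : ℝ → ℝ) : Matrix (Fin n) (Fin n) ℂ :=
  (hA.eigenvectorUnitary : Matrix (Fin n) (Fin n) ℂ) *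
    Matrix.diagonal (fun i => (g (hA.eigenvalues i) : ℂ)) *
    star (hA.eigenvectorUnitary : Matrix (Fin n) (Fin n) ℂ)

/-- Real power of a Hermitian matrix via the spectral decomposition. -/
noncomputable def mpow {n : ℕ} (A : Matrix (Fin n) (Fin n) ℂ) (hA : A.IsHermitian)
    (p : ℝ) : Matrix (Fin n) (Fin n) ℂ :=
  matFun A hA (fun x => x ^ p)

/-- Hilbert-Schmidt (Frobenius) norm of a matrix. -/
noncomputable def frob {n : ℕ} (X : Matrix (Fin n) (Fin n) ℂ) : ℝ :=
  Real.sqrt (Matrix.trace (star X * X)).re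

lemma matFun_mul {n : ℕ} (A : Matrix (Fin n) (Fin n) ℂ) (hA : A.IsHermitian) (g h : ℝ → ℝ) :
    matFun A hA g * matFun A hA h = matFun A hA (fun x => g x * h x) := by
  unfold matFun
  have h1 : star (hA.eigenvectorUnitary : Matrix (Fin n) (Fin n) ℂ) * hA.eigenvectorUnitary
      = 1 := Unitary.coe_star_mul_self _
  simp only [mul_assoc]
  rw [← mul_assoc (star (hA.eigenvectorUnitary : Matrix (Fin n) (Fin n) ℂ)), h1, one_mul,
    ← mul_assoc (Matrix.diagonal _) (Matrix.diagonal _), diagonal_mul_diagonal]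
  simp [← Complex.ofReal_mul]

lemma trace_matFun {n : ℕ} (A : Matrix (Fin n) (Fin n) ℂ) (hA : A.IsHermitian) (g : ℝ → ℝ) :
    (Matrix.trace (matFun A hA g)).re = ∑ i, g (hA.eigenvalues i) := by
  unfold matFun
  rw [Matrix.trace_mul_cycle, Unitary.coe_star_mul_self, one_mul, trace_diagonal]
  simp

lemma matFun_id {n : ℕ} (A : Matrix (Fin n) (Fin n) ℂ) (hA : A.IsHermitian) :
    matFun A hA (fun x => x) = A := by
  conv_rhs => rw [hA.spectral_theorem]
  rfl

lemma conj_diag_entry {n : ℕ} (U W : Matrix (Fin n) (Fin n) ℂ) (d : Fin n → ℝ) (i : Fin n) :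
    (star U * (W * Matrix.diagonal (fun j => (d j : ℂ)) * star W) * U) i i
      = ∑ j, (Complex.normSq ((star W * U) j i) : ℂ) * d j := by
  have key : star U * (W * Matrix.diagonal (fun j => (d j : ℂ)) * star W) * U
      = star (star W * U) * Matrix.diagonal (fun j => (d j : ℂ)) * (star W * U) := by
    rw [Matrix.star_mul, star_star]
    simp only [mul_assoc]
  rw [key, Matrix.mul_apply]
  congr 1; funext j
  rw [Matrix.mul_diagonal, Matrix.star_apply]
  have h2 : star ((star W * U) j i) * (star W * U) j i
      = (Complex.normSq ((star W * U) j i) : ℂ) := by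
    rw [Complex.star_def, ← Complex.normSq_eq_conj_mul_self]
  rw [mul_comm ((star ((star W * U) j i))), mul_assoc, h2, mul_comm]

lemma col_sum_one {n : ℕ} (V : Matrix (Fin n) (Fin n) ℂ) (hV : star V * V = 1) (i : Fin n) :
    ∑ j, Complex.normSq (V j i) = 1 := by
  have := congrArg (fun M : Matrix (Fin n) (Fin n) ℂ => (M i i).re) hV
  simp only [Matrix.mul_apply, Matrix.one_apply_eq, Complex.one_re] at this
  rw [← this, Complex.re_sum]
  congr 1; funext j
  rw [Matrix.star_apply, Complex.star_def, ← Complex.normSq_eq_conj_mul_self,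
    Complex.ofReal_re]

lemma row_sum_one {n : ℕ} (V : Matrix (Fin n) (Fin n) ℂ) (hV : V * star V = 1) (j : Fin n) :
    ∑ i, Complex.normSq (V j i) = 1 := by
  have := congrArg (fun M : Matrix (Fin n) (Fin n) ℂ => (M j j).re) hV
  simp only [Matrix.mul_apply, Matrix.one_apply_eq, Complex.one_re] at this
  rw [← this, Complex.re_sum]
  congr 1; funext i
  rw [Matrix.star_apply, Complex.star_def, Complex.mul_conj, Complex.ofReal_re]

lemma core {n : ℕ} (p t : ℝ) (hp1 : 1 ≤ p) (hp2 : p ≤ 2) (ht0 : 0 ≤ t) (ht1 : t ≤ 1)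
    (α β lam : Fin n → ℝ) (wA wB : Fin n → Fin n → ℝ)
    (hα : ∀ j, 0 ≤ α j) (hβ : ∀ j, 0 ≤ β j)
    (hwA : ∀ i j, 0 ≤ wA i j) (hwB : ∀ i j, 0 ≤ wB i j)
    (hcolA : ∀ i, ∑ j, wA i j = 1) (hrowA : ∀ j, ∑ i, wA i j = 1)
    (hcolB : ∀ i, ∑ j, wB i j = 1) (hrowB : ∀ j, ∑ i, wB i j = 1)
    (hlam : ∀ i, lam i = t * (∑ j, wA i j * α j ^ p) + (1 - t) * (∑ j, wB i j * β j ^ p)) :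
    ∑ i, lam i ^ (1/p) * lam i ^ (1/p)
      ≤ t * ∑ i, α i * α i + (1 - t) * ∑ i, β i * β i := by
  have hp0 : 0 < p := lt_of_lt_of_le one_pos hp1
  have hq1 : 1 ≤ 2 / p := by rw [le_div_iff₀ hp0]; linarith
  have hf : ConvexOn ℝ (Set.Ici 0) fun x : ℝ => x ^ (2/p) := convexOn_rpow hq1
  set sA : Fin n → ℝ := fun i => ∑ j, wA i j * α j ^ p with hsA
  set sB : Fin n → ℝ := fun i => ∑ j, wB i j * β j ^ p with hsB
  have hsA0 : ∀ i, 0 ≤ sA i := fun i => Finset.sum_nonneg fun j _ =>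
    mul_nonneg (hwA i j) (Real.rpow_nonneg (hα j) p)
  have hsB0 : ∀ i, 0 ≤ sB i := fun i => Finset.sum_nonneg fun j _ =>
    mul_nonneg (hwB i j) (Real.rpow_nonneg (hβ j) p)
  have hlam0 : ∀ i, 0 ≤ lam i := fun i => by
    rw [hlam i]
    have := hsA0 i; have := hsB0 i
    nlinarith
  have hsq : ∀ i, lam i ^ (1/p) * lam i ^ (1/p) = lam i ^ (2/p) := fun i => by
    rw [show (2:ℝ)/p = 1/p + 1/p by ring, Real.rpow_add' (hlam0 i)]
    · positivity
  have hJA : ∀ i, sA i ^ (2/p) ≤ ∑ j, wA i j * (α j * α j) := by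
    intro i
    have := hf.map_sum_le (t := Finset.univ) (w := wA i) (p := fun j => α j ^ p)
      (fun j _ => hwA i j) (hcolA i) (fun j _ => Real.rpow_nonneg (hα j) p)
    simp only [smul_eq_mul] at this
    refine le_trans this (le_of_eq ?_)
    refine Finset.sum_congr rfl fun j _ => ?_
    congr 1
    rw [← Real.rpow_mul (hα j), show p * (2/p) = 2 by field_simp, Real.rpow_two, sq]
  have hJB : ∀ i, sB i ^ (2/p) ≤ ∑ j, wB i j * (β j * β j) := by
    intro i
    have := hf.map_sum_le (t := Finset.univ) (w := wB i) (p := fun j => β j ^ p)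
      (fun j _ => hwB i j) (hcolB i) (fun j _ => Real.rpow_nonneg (hβ j) p)
    simp only [smul_eq_mul] at this
    refine le_trans this (le_of_eq ?_)
    refine Finset.sum_congr rfl fun j _ => ?_
    congr 1
    rw [← Real.rpow_mul (hβ j), show p * (2/p) = 2 by field_simp, Real.rpow_two, sq]
  have h2pt : ∀ i, lam i ^ (2/p) ≤ t * sA i ^ (2/p) + (1 - t) * sB i ^ (2/p) := by
    intro i
    have := hf.2 (Set.mem_Ici.2 (hsA0 i)) (Set.mem_Ici.2 (hsB0 i)) ht0 (by linarith)
      (by ring : t + (1 - t) = 1)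
    rw [hlam i]
    simpa only [smul_eq_mul] using this
  calc ∑ i, lam i ^ (1/p) * lam i ^ (1/p)
      = ∑ i, lam i ^ (2/p) := Finset.sum_congr rfl fun i _ => hsq i
    _ ≤ ∑ i, (t * sA i ^ (2/p) + (1 - t) * sB i ^ (2/p)) :=
        Finset.sum_le_sum fun i _ => h2pt i
    _ ≤ ∑ i, (t * (∑ j, wA i j * (α j * α j)) + (1 - t) * (∑ j, wB i j * (β j * β j))) := by
        refine Finset.sum_le_sum fun i _ => ?_
        exact add_le_add (mul_le_mul_of_nonneg_left (hJA i) ht0)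
          (mul_le_mul_of_nonneg_left (hJB i) (by linarith))
    _ = t * ∑ i, α i * α i + (1 - t) * ∑ i, β i * β i := by
        rw [Finset.sum_add_distrib, ← Finset.mul_sum, ← Finset.mul_sum]
        congr 1
        · congr 1
          rw [Finset.sum_comm]
          refine Finset.sum_congr rfl fun j _ => ?_
          rw [← Finset.sum_mul, hrowA j, one_mul]
        · congr 1
          rw [Finset.sum_comm]
          refine Finset.sum_congr rfl fun j _ => ?_
          rw [← Finset.sum_mul, hrowB j, one_mul]

theorem stmt2 {n : ℕ} (A B : Matrix (Fin n) (Fin n) ℂ)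
    (hA : A.PosDef) (hB : B.PosDef) (p t : ℝ)
    (hp : p ∈ Set.Icc (1:ℝ) 2) (ht : t ∈ Set.Icc (0:ℝ) 1)
    (hM : (t • mpow A hA.1 p + (1 - t) • mpow B hB.1 p).IsHermitian) :
    (Matrix.trace (mpow _ hM (1/p) * mpow _ hM (1/p))).re ≤
      t * (Matrix.trace (A * A)).re + (1 - t) * (Matrix.trace (B * B)).re := by
  obtain ⟨hp1, hp2⟩ := hp
  obtain ⟨ht0, ht1⟩ := ht
  -- abbreviations
  set U : Matrix (Fin n) (Fin n) ℂ := (hM.eigenvectorUnitary : Matrix (Fin n) (Fin n) ℂ)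
    with hU
  set WA : Matrix (Fin n) (Fin n) ℂ := (hA.1.eigenvectorUnitary : Matrix (Fin n) (Fin n) ℂ)
    with hWA
  set WB : Matrix (Fin n) (Fin n) ℂ := (hB.1.eigenvectorUnitary : Matrix (Fin n) (Fin n) ℂ)
    with hWB
  set α : Fin n → ℝ := hA.1.eigenvalues
  set β : Fin n → ℝ := hB.1.eigenvalues
  set lam : Fin n → ℝ := hM.eigenvalues
  set VA : Matrix (Fin n) (Fin n) ℂ := star WA * U with hVA
  set VB : Matrix (Fin n) (Fin n) ℂ := star WB * U with hVB
  set wA : Fin n → Fin n → ℝ := fun i j => Complex.normSq (VA j i) with hwAdef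
  set wB : Fin n → Fin n → ℝ := fun i j => Complex.normSq (VB j i) with hwBdef
  -- unitarity facts
  have hUs : star U * U = 1 := Unitary.coe_star_mul_self _
  have hUs' : U * star U = 1 := Unitary.coe_mul_star_self _
  have hWAs : WA * star WA = 1 := Unitary.coe_mul_star_self _
  have hWAs' : star WA * WA = 1 := Unitary.coe_star_mul_self _
  have hWBs : WB * star WB = 1 := Unitary.coe_mul_star_self _
  have hWBs' : star WB * WB = 1 := Unitary.coe_star_mul_self _
  have hVAu : star VA * VA = 1 := by
    rw [hVA, Matrix.star_mul, star_star, mul_assoc, ← mul_assoc WA, hWAs, one_mul, hUs]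
  have hVAu' : VA * star VA = 1 := by
    rw [hVA, Matrix.star_mul, star_star, mul_assoc, ← mul_assoc U, hUs', one_mul, hWAs']
  have hVBu : star VB * VB = 1 := by
    rw [hVB, Matrix.star_mul, star_star, mul_assoc, ← mul_assoc WB, hWBs, one_mul, hUs]
  have hVBu' : VB * star VB = 1 := by
    rw [hVB, Matrix.star_mul, star_star, mul_assoc, ← mul_assoc U, hUs', one_mul, hWBs']
  -- quadratic form identities
  have hmA : mpow A hA.1 p = WA * Matrix.diagonal (fun j => ((α j ^ p : ℝ) : ℂ)) * star WA :=
    rfl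
  have hmB : mpow B hB.1 p = WB * Matrix.diagonal (fun j => ((β j ^ p : ℝ) : ℂ)) * star WB :=
    rfl
  have hQA : ∀ i, (star U * mpow A hA.1 p * U) i i
      = ((∑ j, wA i j * α j ^ p : ℝ) : ℂ) := by
    intro i
    rw [hmA, conj_diag_entry U WA (fun j => α j ^ p) i]
    push_cast
    rfl
  have hQB : ∀ i, (star U * mpow B hB.1 p * U) i i
      = ((∑ j, wB i j * β j ^ p : ℝ) : ℂ) := by
    intro i
    rw [hmB, conj_diag_entry U WB (fun j => β j ^ p) i]
    push_cast
    rfl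
  -- eigenvalue formula
  have hlam : ∀ i, lam i = t * (∑ j, wA i j * α j ^ p) + (1 - t) * (∑ j, wB i j * β j ^ p) := by
    intro i
    have hdiag : star U * (t • mpow A hA.1 p + (1 - t) • mpow B hB.1 p) * U
        = Matrix.diagonal (RCLike.ofReal ∘ hM.eigenvalues) := by
      rw [← hM.conjStarAlgAut_star_eigenvectorUnitary, Unitary.conjStarAlgAut_apply,
        Unitary.coe_star, star_star]
    have e1 : star U * (t • mpow A hA.1 p + (1 - t) • mpow B hB.1 p) * U
        = t • (star U * mpow A hA.1 p * U) + (1 - t) • (star U * mpow B hB.1 p * U) := by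
      rw [Matrix.mul_add, Matrix.add_mul, Matrix.mul_smul, Matrix.smul_mul, Matrix.mul_smul,
        Matrix.smul_mul]
    have h1 := congrArg (fun X : Matrix (Fin n) (Fin n) ℂ => (X i i).re) hdiag
    rw [e1, Matrix.add_apply, Matrix.smul_apply, Matrix.smul_apply, hQA i, hQB i] at h1
    simp only [Matrix.diagonal_apply_eq, Function.comp_apply] at h1
    have h2 : (t • ((∑ j, wA i j * α j ^ p : ℝ) : ℂ)
        + (1 - t) • ((∑ j, wB i j * β j ^ p : ℝ) : ℂ)).re = lam i := h1
    rw [← h2]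
    simp [Complex.real_smul, ← Complex.ofReal_mul, ← Complex.ofReal_add]
  -- rewrite LHS
  have hL : (Matrix.trace (mpow _ hM (1/p) * mpow _ hM (1/p))).re
      = ∑ i, lam i ^ (1/p) * lam i ^ (1/p) := by
    rw [show mpow _ hM (1/p) = matFun _ hM (fun x => x ^ (1/p)) from rfl]
    rw [matFun_mul, trace_matFun]
  -- rewrite RHS traces
  have hRA : (Matrix.trace (A * A)).re = ∑ i, α i * α i := by
    conv_lhs => rw [← matFun_id A hA.1]
    rw [matFun_mul, trace_matFun]
  have hRB : (Matrix.trace (B * B)).re = ∑ i, β i * β i := by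
    conv_lhs => rw [← matFun_id B hB.1]
    rw [matFun_mul, trace_matFun]
  rw [hL, hRA, hRB]
  exact core p t hp1 hp2 ht0 ht1 α β lam wA wB
    (fun j => (hA.eigenvalues_pos j).le) (fun j => (hB.eigenvalues_pos j).le)
    (fun i j => Complex.normSq_nonneg _) (fun i j => Complex.normSq_nonneg _)
    (fun i => col_sum_one VA hVAu i) (fun j => row_sum_one VA hVAu' j)
    (fun i => col_sum_one VB hVBu i) (fun j => row_sum_one VB hVBu' j)
    hlam
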